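/- Let n ≥ 2, L ≥ 1, N ≥ 1, m₁, …, m_N ≥ 2, Γ = ℤ/m₁ ∗ ⋯ ∗ ℤ/m_N with distinguished generators z₁, …, z_N, and F the free group on x₁, …, x_{n−1}, y₁, …, y_L. Then for every 1 ≤ θ ≤ L and 1 ≤ o ≤ N, the element (y_θ·z_o)^{m_o}·(y_θ⁻¹·z_o⁻¹)^{m_o} of F ∗ Γ does not belong to the normal closure in F ∗ Γ of the set {(x_k·z_ν)^{m_ν}·(x_k⁻¹·z_ν⁻¹)^{m_ν} : 1 ≤ k ≤ n−1, 1 ≤ ν ≤ N}. -/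

import Mathlib

/-- The free product `F_{n-1+L} ∗ Γ`, where `F_{n-1+L}` is the free group on the
generators `x₁, …, x_{n-1}, y₁, …, y_L` and `Γ = ℤ/m₁ ∗ ⋯ ∗ ℤ/m_N`. -/
abbrev OrbifoldFundGroup (n L N : ℕ) (m : Fin N → ℕ) : Type :=
  Monoid.Coprod (FreeGroup (Fin (n - 1) ⊕ Fin L))
    (Monoid.CoprodI fun ν : Fin N => Multiplicative (ZMod (m ν)))

/-- The generator `x_k` of the free factor, `1 ≤ k ≤ n-1`. -/
def xGen (n L N : ℕ) (m : Fin N → ℕ) (k : Fin (n - 1)) : OrbifoldFundGroup n L N m :=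
  Monoid.Coprod.inl (FreeGroup.of (Sum.inl k))

/-- The generator `y_λ` of the free factor, `1 ≤ λ ≤ L`. -/
def yGen (n L N : ℕ) (m : Fin N → ℕ) (l : Fin L) : OrbifoldFundGroup n L N m :=
  Monoid.Coprod.inl (FreeGroup.of (Sum.inr l))

/-- The distinguished generator `z_ν` of the `ν`-th cyclic factor `ℤ/m_ν` of `Γ`. -/
def zGen (n L N : ℕ) (m : Fin N → ℕ) (ν : Fin N) : OrbifoldFundGroup n L N m :=
  Monoid.Coprod.inr (Monoid.CoprodI.of (Multiplicative.ofAdd (1 : ZMod (m ν))))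

/- ### Auxiliary permutations on `Option (ZMod M)` -/

private def aP (M : ℕ) : Equiv.Perm (Option (ZMod M)) := Equiv.swap (some 0) none

private def bP (M : ℕ) : Equiv.Perm (Option (ZMod M)) :=
  (Equiv.addLeft (1 : ZMod M)).optionCongr

private lemma aP_inv (M : ℕ) : (aP M)⁻¹ = aP M := Equiv.swap_inv _ _

private lemma aP_none (M : ℕ) : aP M none = some 0 := Equiv.swap_apply_right _ _

private lemma aP_some_zero (M : ℕ) : aP M (some 0) = none := Equiv.swap_apply_left _ _

private lemma aP_some (M : ℕ) {x : ZMod M} (hx : x ≠ 0) : aP M (some x) = some x :=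
  Equiv.swap_apply_of_ne_of_ne (by simpa using hx) (by simp)

private lemma bP_some (M : ℕ) (x : ZMod M) : bP M (some x) = some (1 + x) := rfl

private lemma bP_none (M : ℕ) : bP M none = none := rfl

private lemma bP_inv_some (M : ℕ) (x : ZMod M) : (bP M)⁻¹ (some x) = some (x - 1) := by
  rw [Equiv.Perm.inv_eq_iff_eq, bP_some]
  ring_nf

private lemma bP_inv_none (M : ℕ) : (bP M)⁻¹ none = none := by
  rw [Equiv.Perm.inv_eq_iff_eq, bP_none]

private lemma lemA (M : ℕ) (hM : 2 ≤ M) :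
    ∀ k, 1 ≤ k → k ≤ M → (((aP M)⁻¹ * (bP M)⁻¹) ^ k) none = some (1 - (k : ZMod M)) := by
  haveI : NeZero M := ⟨by omega⟩
  intro k
  induction k with
  | zero => omega
  | succ k ih =>
    intro _ hkM
    rcases Nat.eq_zero_or_pos k with rfl | hk
    · rw [pow_one, Equiv.Perm.mul_apply, bP_inv_none, aP_inv, aP_none]
      norm_num
    · have hMk : ¬ (M ∣ k) := fun h => absurd (Nat.le_of_dvd (by omega) h) (by omega)
      have hkz : ((k : ℕ) : ZMod M) ≠ 0 := by
        rw [Ne, ZMod.natCast_eq_zero_iff]; exact hMk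
      rw [pow_succ', Equiv.Perm.mul_apply, ih hk (by omega), Equiv.Perm.mul_apply,
        bP_inv_some, aP_inv]
      have h1 : (1 : ZMod M) - (k : ZMod M) - 1 = -(k : ZMod M) := by ring
      rw [h1, aP_some M (by simpa using hkz)]
      congr 1
      push_cast
      ring

private lemma lemB (M : ℕ) :
    ∀ k, k + 2 ≤ M → ((aP M * bP M) ^ k) (some 1) = some (1 + (k : ZMod M)) := by
  intro k
  induction k with
  | zero => simp
  | succ k ih =>
    intro hkM
    haveI : NeZero M := ⟨by omega⟩
    have hMk : ¬ (M ∣ (k + 2)) := fun h => absurd (Nat.le_of_dvd (by omega) h) (by omega)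
    have hkz : (((k : ℕ) + 2 : ℕ) : ZMod M) ≠ 0 := by
      rw [Ne, ZMod.natCast_eq_zero_iff]; exact hMk
    rw [pow_succ', Equiv.Perm.mul_apply, ih (by omega), Equiv.Perm.mul_apply, bP_some]
    have h1 : (1 : ZMod M) + (1 + (k : ZMod M)) = (((k : ℕ) + 2 : ℕ) : ZMod M) := by
      push_cast; ring
    rw [h1, aP_some M hkz]
    congr 1
    push_cast
    ring

private lemma keyNe (M : ℕ) (hM : 2 ≤ M) :
    (aP M * bP M) ^ M * ((aP M)⁻¹ * (bP M)⁻¹) ^ M ≠ 1 := by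
  haveI : NeZero M := ⟨by omega⟩
  intro h
  have h0 : ((aP M * bP M) ^ M * ((aP M)⁻¹ * (bP M)⁻¹) ^ M) none = none := by
    rw [h]; rfl
  rw [Equiv.Perm.mul_apply, lemA M hM M (by omega) le_rfl, ZMod.natCast_self, sub_zero] at h0
  obtain ⟨j, rfl⟩ : ∃ j, M = j + 2 := ⟨M - 2, by omega⟩
  rw [show j + 2 = (j + 1) + 1 from rfl, pow_succ', pow_succ'] at h0
  simp only [Equiv.Perm.mul_apply] at h0
  rw [lemB (j + 2) j le_rfl, bP_some] at h0
  have h1 : (1 : ZMod (j + 2)) + (1 + (j : ZMod (j + 2))) = 0 := by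
    have : (((j : ℕ) + 2 : ℕ) : ZMod (j + 2)) = 0 := ZMod.natCast_self _
    push_cast at this ⊢
    linear_combination this
  rw [h1, aP_some_zero, bP_none, aP_none] at h0
  exact Option.some_ne_none _ h0

/-- A homomorphism from `Multiplicative A` to permutations, via an additive hom to `ZMod M`. -/
private def zh (M : ℕ) {A : Type*} [AddGroup A] (ψ : A →+ ZMod M) :
    Multiplicative A →* Equiv.Perm (Option (ZMod M)) where
  toFun x := (Equiv.addLeft (ψ x.toAdd)).optionCongr
  map_one' := by
    ext z
    cases z <;> simp
  map_mul' x y := by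
    ext z
    cases z <;> simp [add_assoc]

private def phiHom (n L N : ℕ) (m : Fin N → ℕ) (o : Fin N) :
    OrbifoldFundGroup n L N m →* Equiv.Perm (Option (ZMod (m o))) :=
  Monoid.Coprod.lift
    (FreeGroup.lift (Sum.elim (fun _ => 1) (fun _ => aP (m o))))
    (Monoid.CoprodI.lift fun ν =>
      if h : ν = o then
        zh (m o) (ZMod.castHom (show m o ∣ m ν by rw [h]) (ZMod (m o))).toAddMonoidHom
      else 1)

private lemma phi_x (n L N : ℕ) (m : Fin N → ℕ) (o : Fin N) (k : Fin (n - 1)) :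
    phiHom n L N m o (xGen n L N m k) = 1 := by
  simp [phiHom, xGen]

private lemma phi_y (n L N : ℕ) (m : Fin N → ℕ) (o : Fin N) (l : Fin L) :
    phiHom n L N m o (yGen n L N m l) = aP (m o) := by
  simp [phiHom, yGen]

private lemma phi_z (n L N : ℕ) (m : Fin N → ℕ) (o : Fin N) :
    phiHom n L N m o (zGen n L N m o) = bP (m o) := by
  simp [phiHom, zGen, Monoid.CoprodI.lift_of, zh, bP]

/-- For every `1 ≤ θ ≤ L` and `1 ≤ o ≤ N`, the element
`(y_θ·z_o)^{m_o}·(y_θ⁻¹·z_o⁻¹)^{m_o}` of `F ∗ Γ` does not belong to the normal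
closure of the set `{(x_k·z_ν)^{m_ν}·(x_k⁻¹·z_ν⁻¹)^{m_ν}}`. -/
theorem stmt_7 (n L N : ℕ) (hn : 2 ≤ n) (hL : 1 ≤ L) (hN : 1 ≤ N)
    (m : Fin N → ℕ) (hm : ∀ ν, 2 ≤ m ν) (θ : Fin L) (o : Fin N) :
    (yGen n L N m θ * zGen n L N m o) ^ m o *
        ((yGen n L N m θ)⁻¹ * (zGen n L N m o)⁻¹) ^ m o ∉
      Subgroup.normalClosure
        {g : OrbifoldFundGroup n L N m | ∃ (k : Fin (n - 1)) (ν : Fin N),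
          g = (xGen n L N m k * zGen n L N m ν) ^ m ν *
            ((xGen n L N m k)⁻¹ * (zGen n L N m ν)⁻¹) ^ m ν} := by
  intro hmem
  set φ := phiHom n L N m o with hφ
  have hker : Subgroup.normalClosure
      {g : OrbifoldFundGroup n L N m | ∃ (k : Fin (n - 1)) (ν : Fin N),
        g = (xGen n L N m k * zGen n L N m ν) ^ m ν *
          ((xGen n L N m k)⁻¹ * (zGen n L N m ν)⁻¹) ^ m ν} ≤ φ.ker := by
    apply Subgroup.normalClosure_le_normal
    rintro g ⟨k, ν, rfl⟩
    have hx : φ (xGen n L N m k) = 1 := phi_x n L N m o k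
    have : φ ((xGen n L N m k * zGen n L N m ν) ^ m ν *
        ((xGen n L N m k)⁻¹ * (zGen n L N m ν)⁻¹) ^ m ν) = 1 := by
      rw [map_mul, map_pow, map_pow, map_mul, map_mul, map_inv φ, map_inv φ, hx,
        one_mul, inv_one, one_mul, inv_pow, mul_inv_cancel]
    exact this
  have h1 : φ ((yGen n L N m θ * zGen n L N m o) ^ m o *
      ((yGen n L N m θ)⁻¹ * (zGen n L N m o)⁻¹) ^ m o) = 1 := hker hmem
  rw [map_mul, map_pow, map_pow, map_mul, map_mul, map_inv φ, map_inv φ,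
    phi_y n L N m o θ, phi_z n L N m o] at h1
  exact keyNe (m o) (hm o) h1
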